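/- Let φ : [0, ∞) → [0, ∞) be a concave index function (monotonically increasing, φ(0) = 0), let α₁ > 0, and suppose α_opt > 0 satisfies 1/α_opt ∈ −∂(−φ)(α₁). Then α₁/α_opt ≤ φ(α₁); in particular, if φ(α₁) ≤ 1 then α₁ ≤ α_opt. -/

import Mathlib

/-- The convex subdifferential of `-φ` (viewed as a convex function on `[0,∞)`,
for `φ` a concave index function) at a point `x ≥ 0`:
`m ∈ ∂(−φ)(x)` iff `−φ(τ) ≥ −φ(x) + m·(τ − x)` for all `τ ≥ 0`. -/
def negPhiSubdiff (φ : ℝ → ℝ) (x : ℝ) : Set ℝ :=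
  { m | ∀ τ ≥ (0 : ℝ), m * (τ - x) ≤ φ x - φ τ }

/-- **Comparison of the optimal parameter with the noise level.**
Let `φ : [0, ∞) → [0, ∞)` be a concave index function (monotonically increasing,
`φ(0) = 0`), let `α₁ > 0`, and suppose `α_opt > 0` satisfies
`1/α_opt ∈ −∂(−φ)(α₁)`. Then `α₁/α_opt ≤ φ(α₁)`; in particular, if `φ(α₁) ≤ 1`
then `α₁ ≤ α_opt`. -/
theorem statement_13 (φ : ℝ → ℝ)
    (hφ0 : φ 0 = 0)
    (hφmono : MonotoneOn φ (Set.Ici (0 : ℝ)))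
    (hφnonneg : ∀ τ ≥ (0 : ℝ), 0 ≤ φ τ)
    (hφconcave : ConcaveOn ℝ (Set.Ici (0 : ℝ)) φ)
    (α₁ : ℝ) (hα₁ : 0 < α₁)
    (αopt : ℝ) (hαopt : 0 < αopt)
    (hsub : -(1 / αopt) ∈ negPhiSubdiff φ α₁) :
    α₁ / αopt ≤ φ α₁ ∧ (φ α₁ ≤ 1 → α₁ ≤ αopt) := by
  have h := hsub 0 le_rfl
  rw [hφ0] at h
  have h1 : α₁ / αopt ≤ φ α₁ := by
    have : -(1 / αopt) * (0 - α₁) = α₁ / αopt := by field_simp; ring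
    linarith [this ▸ h]
  refine ⟨h1, fun hle => ?_⟩
  have : α₁ / αopt ≤ 1 := h1.trans hle
  calc α₁ = (α₁ / αopt) * αopt := by field_simp
    _ ≤ 1 * αopt := by nlinarith
    _ = αopt := one_mul _
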